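/- Let ε ∈ (0, 1), μ₀ > 0, τ > 0, T > 0 and n ∈ ℕ, and define the pulse-train mass transfer coefficient μ : [0, ∞) → ℝ by μ(t) = μ₀·e^{−(t − kT)/τ} for t ∈ [kT, (k+1)T), k = 0, 1, …, n−1, and μ(t) = 0 for t ≥ nT. If C_E, C_RE : [0, ∞) → ℝ satisfy C_E′(t) = −((1−ε)/ε)·μ(t)·(C_E(t) − C_RE(t)) and C_RE′(t) = μ(t)·(C_E(t) − C_RE(t)) (in the sense that C_E − C_RE is absolutely continuous with derivative −(1/ε)·μ(t)·(C_E − C_RE) almost everywhere), then for every t ≥ nT, C_E(t) − C_RE(t) = (C_E(0) − C_RE(0))·exp(−(n·μ₀τ/ε)·(1 − e^{−T/τ})). In particular, for fixed pulse parameters the residual concentration difference tends to 0 as the number of pulses n tends to infinity. -/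

import Mathlib

open MeasureTheory Set intervalIntegral Filter
open scoped Interval

/-- Continuity and right-differentiability of a solution of the integral
equation on an interval where the integrand is interval-integrable. -/
private lemma uniq_aux {f D : ℝ → ℝ} {A : ℝ} (hA : 0 ≤ A)
    (hfr : ∀ t, 0 ≤ t → ContinuousWithinAt f (Ici t) t)
    (hD : ∀ t, 0 ≤ t → D t = D 0 + ∫ s in (0:ℝ)..t, f s * D s)
    (hint : IntervalIntegrable (fun s => f s * D s) volume 0 A) :
    ContinuousOn D (Icc 0 A) ∧
      ∀ x ∈ Ico 0 A, HasDerivWithinAt D (f x * D x) (Ici x) x := by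
  set h : ℝ → ℝ := fun s => f s * D s with hh
  set W : ℝ → ℝ := fun u => D 0 + ∫ s in (0:ℝ)..u, h s with hW
  have hWD : EqOn D W (Icc 0 A) := fun y hy => hD y hy.1
  have hWcont : ContinuousOn W (Icc 0 A) := by
    have := intervalIntegral.continuousOn_primitive_interval
      (μ := volume) (f := h) (a := (0:ℝ)) (b := A)
      (by rw [uIcc_of_le hA]; exact (intervalIntegrable_iff_integrableOn_Icc_of_le hA).1 hint)
    rw [uIcc_of_le hA] at this
    exact continuousOn_const.add this
  have hDcont : ContinuousOn D (Icc 0 A) := hWcont.congr hWD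
  refine ⟨hDcont, fun x hx => ?_⟩
  have hx0 : (0:ℝ) ≤ x := hx.1
  have hxA : x < A := hx.2
  have hintx : IntervalIntegrable h volume 0 x :=
    hint.mono_set (by rw [uIcc_of_le hx0, uIcc_of_le hA]; exact Icc_subset_Icc le_rfl hxA.le)
  have hmem : Ioc x A ∈ nhdsWithin x (Ioi x) := Ioc_mem_nhdsGT_of_mem ⟨le_rfl, hxA⟩
  have hsm : StronglyMeasurableAtFilter h (nhdsWithin x (Ioi x)) volume := by
    refine ⟨Ioc x A, hmem, ?_⟩
    have : IntegrableOn h (Ioc x A) volume :=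
      ((intervalIntegrable_iff_integrableOn_Icc_of_le hA).1 hint).mono_set
        (Ioc_subset_Icc_self.trans (Icc_subset_Icc hx0 le_rfl))
    exact this.aestronglyMeasurable
  have hDc : ContinuousWithinAt D (Ioi x) x := by
    have h1 : ContinuousWithinAt D (Ioc x A) x := by
      have := hDcont x ⟨hx0, hxA.le⟩
      exact this.mono (Ioc_subset_Icc_self.trans (Icc_subset_Icc hx0 le_rfl))
    have h2 : nhdsWithin x (Ioc x A) = nhdsWithin x (Ioi x) :=
      nhdsWithin_Ioc_eq_nhdsGT hxA
    unfold ContinuousWithinAt at h1 ⊢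
    rwa [h2] at h1
  have hhc : ContinuousWithinAt h (Ioi x) x :=
    ((hfr x hx0).mono Ioi_subset_Ici_self).mul hDc
  have hWd : HasDerivWithinAt W (h x) (Ici x) x := by
    have h3 : HasDerivWithinAt (fun u => ∫ s in (0:ℝ)..u, h s) (h x) (Ici x) x :=
      intervalIntegral.integral_hasDerivWithinAt_right hintx hsm hhc
    have h4 := (hasDerivWithinAt_const x (Ici x) (D 0)).add h3
    rw [zero_add] at h4
    exact h4
  exact hWd.congr (fun y hy => hD y (hx0.trans hy)) (hD x hx0)

/-- Grönwall a-priori bound for solutions of the integral equation. -/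
private lemma uniq_bound {f D : ℝ → ℝ} {K A : ℝ} (hA : 0 ≤ A)
    (hK : ∀ t, 0 ≤ t → |f t| ≤ K)
    (hfr : ∀ t, 0 ≤ t → ContinuousWithinAt f (Ici t) t)
    (hD : ∀ t, 0 ≤ t → D t = D 0 + ∫ s in (0:ℝ)..t, f s * D s)
    (hint : IntervalIntegrable (fun s => f s * D s) volume 0 A) :
    ∀ x ∈ Icc 0 A, |D x| ≤ |D 0| * Real.exp (K * x) := by
  obtain ⟨hc, hd⟩ := uniq_aux hA hfr hD hint
  intro x hx
  have := norm_le_gronwallBound_of_norm_deriv_right_le (δ := |D 0|) (K := K) (ε := 0)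
    hc hd (by simp [Real.norm_eq_abs]) (fun y hy => by
      have h1 : |f y| ≤ K := hK y hy.1
      have : ‖f y * D y‖ = |f y| * ‖D y‖ := by
        simp [Real.norm_eq_abs, abs_mul]
      rw [this]
      have h2 : |f y| * ‖D y‖ ≤ K * ‖D y‖ :=
        mul_le_mul_of_nonneg_right h1 (norm_nonneg _)
      linarith) x hx
  rw [gronwallBound_ε0] at this
  simpa [Real.norm_eq_abs] using this

/-- Bootstrap: the nonlinear integrand is interval-integrable on every `[0, A]`. -/
private lemma uniq_integrable {f D : ℝ → ℝ} {K : ℝ}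
    (hK : ∀ t, 0 ≤ t → |f t| ≤ K)
    (hfi : ∀ A, 0 ≤ A → IntegrableOn f (Icc 0 A) volume)
    (hfr : ∀ t, 0 ≤ t → ContinuousWithinAt f (Ici t) t)
    (hD : ∀ t, 0 ≤ t → D t = D 0 + ∫ s in (0:ℝ)..t, f s * D s) :
    ∀ A, 0 ≤ A → IntervalIntegrable (fun s => f s * D s) volume 0 A := by
  have hK0 : 0 ≤ K := (abs_nonneg (f 0)).trans (hK 0 le_rfl)
  set h : ℝ → ℝ := fun s => f s * D s with hh
  set S : Set ℝ := {t : ℝ | 0 ≤ t ∧ IntervalIntegrable h volume 0 t} with hS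
  have hS0 : (0:ℝ) ∈ S := ⟨le_rfl, IntervalIntegrable.refl⟩
  have hSdc : ∀ t ∈ S, ∀ t', 0 ≤ t' → t' ≤ t → t' ∈ S := by
    intro t ht t' h0 hle
    exact ⟨h0, ht.2.mono_set (by
      rw [uIcc_of_le h0, uIcc_of_le ht.1]; exact Icc_subset_Icc le_rfl hle)⟩
  intro A hA
  by_contra hnA
  have hAS : A ∉ S := fun hmem => hnA hmem.2
  have hSsub : S ⊆ Ico 0 A := by
    intro t ht
    refine ⟨ht.1, ?_⟩
    by_contra hlt
    push_neg at hlt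
    exact hAS (hSdc t ht A hA hlt)
  have hKey2 : ∀ t, 0 ≤ t → t ∉ S → D t = D 0 := by
    intro t ht htS
    have hni : ¬ IntervalIntegrable h volume 0 t := fun hi => htS ⟨ht, hi⟩
    rw [hD t ht, intervalIntegral.integral_undef hni, add_zero]
  have hSne : S.Nonempty := ⟨0, hS0⟩
  have hbdd : BddAbove S := ⟨A, fun t ht => (hSsub ht).2.le⟩
  set b : ℝ := sSup S with hb
  have hb0 : 0 ≤ b := le_csSup hbdd hS0
  have hbA : b ≤ A := csSup_le hSne (fun t ht => (hSsub ht).2.le)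
  have hIco : Ico 0 b ⊆ S := by
    intro y hy
    obtain ⟨s, hs, hys⟩ := exists_lt_of_lt_csSup hSne hy.2
    exact hSdc s hs y hy.1 hys.le
  have hSmeas : MeasurableSet S := by
    apply Set.OrdConnected.measurableSet
    constructor
    intro x hx y hy z hz
    exact hSdc y hy z (hx.1.trans hz.1) hz.2
  set I : ℝ → ℝ := fun t => ∫ s in (0:ℝ)..t, h s with hI
  have hIcont : ∀ c ∈ S, ContinuousOn I (Icc 0 c) := by
    intro c hc
    have := intervalIntegral.continuousOn_primitive_interval (μ := volume) (f := h)
      (a := (0:ℝ)) (b := c)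
      (by rw [uIcc_of_le hc.1]
          exact (intervalIntegrable_iff_integrableOn_Icc_of_le hc.1).1 hc.2)
    rwa [uIcc_of_le hc.1] at this
  have hindm : AEStronglyMeasurable (S.indicator I) volume := by
    rw [aestronglyMeasurable_indicator_iff hSmeas]
    by_cases hbS : b ∈ S
    · have hSeq : S = Icc 0 b := by
        apply Subset.antisymm
        · exact fun t ht => ⟨ht.1, le_csSup hbdd ht⟩
        · exact fun t ht => hSdc b hbS t ht.1 ht.2
      rw [hSeq]
      exact (hIcont b hbS).aestronglyMeasurable measurableSet_Icc
    · have hbpos : 0 < b := by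
        rcases lt_or_eq_of_le hb0 with h | h
        · exact h
        · exact absurd (h ▸ hS0 : b ∈ S) hbS
      have hSeq : S = Ico 0 b := by
        apply Subset.antisymm
        · intro t ht
          refine ⟨ht.1, lt_of_le_of_ne (le_csSup hbdd ht) ?_⟩
          rintro rfl; exact hbS ht
        · exact hIco
      have hunion : S = ⋃ k : ℕ, Icc 0 (b * k / (k + 1)) := by
        rw [hSeq]
        ext y
        simp only [mem_Ico, mem_iUnion, mem_Icc]
        constructor
        · rintro ⟨hy0, hyb⟩
          obtain ⟨k, hk⟩ := exists_nat_gt (y / (b - y))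
          refine ⟨k, hy0, ?_⟩
          have hby : 0 < b - y := by linarith
          rw [div_lt_iff₀ hby] at hk
          rw [le_div_iff₀ (by positivity : (0:ℝ) < (k:ℝ) + 1)]
          nlinarith
        · rintro ⟨k, hy0, hyk⟩
          refine ⟨hy0, lt_of_le_of_lt hyk ?_⟩
          rw [div_lt_iff₀ (by positivity : (0:ℝ) < (k:ℝ) + 1)]
          nlinarith [Nat.cast_nonneg (α := ℝ) k]
      rw [hunion, aestronglyMeasurable_iUnion_iff]
      intro k
      have hck : b * k / (k + 1) ∈ S := by
        rw [hSeq]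
        constructor
        · positivity
        · rw [div_lt_iff₀ (by positivity : (0:ℝ) < (k:ℝ) + 1)]
          nlinarith [Nat.cast_nonneg (α := ℝ) k]
      exact (hIcont _ hck).aestronglyMeasurable measurableSet_Icc
  have hDm : AEStronglyMeasurable D (volume.restrict (Icc 0 A)) := by
    have hg : AEStronglyMeasurable (fun t => D 0 + S.indicator I t)
        (volume.restrict (Icc 0 A)) :=
      (aestronglyMeasurable_const.add hindm).restrict
    refine hg.congr ?_
    refine (ae_restrict_iff' measurableSet_Icc).2 (ae_of_all _ fun t ht => ?_)
    show D 0 + S.indicator I t = D t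
    by_cases htS : t ∈ S
    · rw [Set.indicator_of_mem htS, ← hD t ht.1]
    · rw [Set.indicator_of_notMem htS, add_zero, hKey2 t ht.1 htS]
  set M : ℝ := |D 0| * Real.exp (K * A) + |D 0| with hM
  have hDb : ∀ t ∈ Icc 0 A, |D t| ≤ M := by
    intro t ht
    by_cases htS : t ∈ S
    · have := uniq_bound htS.1 hK hfr hD htS.2 t ⟨htS.1, le_rfl⟩
      have h2 : Real.exp (K * t) ≤ Real.exp (K * A) :=
        Real.exp_le_exp.2 (mul_le_mul_of_nonneg_left ht.2 hK0)
      have h3 : |D 0| * Real.exp (K * t) ≤ |D 0| * Real.exp (K * A) :=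
        mul_le_mul_of_nonneg_left h2 (abs_nonneg _)
      have h4 : (0:ℝ) ≤ |D 0| := abs_nonneg _
      calc |D t| ≤ |D 0| * Real.exp (K * t) := this
        _ ≤ M := by rw [hM]; linarith
    · rw [hKey2 t ht.1 htS]
      have : (0:ℝ) ≤ |D 0| * Real.exp (K * A) := by positivity
      rw [hM]; linarith
  have hfint : AEStronglyMeasurable f (volume.restrict (Icc 0 A)) :=
    (hfi A hA).aestronglyMeasurable
  have hhm : AEStronglyMeasurable h (volume.restrict (Icc 0 A)) := hfint.mul hDm
  have hhi : IntegrableOn h (Icc 0 A) volume := by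
    refine Integrable.mono' (g := fun _ => K * M)
      (integrableOn_const (measure_Icc_lt_top.ne)) hhm ?_
    refine (ae_restrict_iff' measurableSet_Icc).2 (ae_of_all _ fun t ht => ?_)
    have h1 : |f t| ≤ K := hK t ht.1
    have h2 : |D t| ≤ M := hDb t ht
    have hM0 : 0 ≤ M := (abs_nonneg (D t)).trans h2
    calc ‖h t‖ = |f t| * |D t| := by simp [hh, Real.norm_eq_abs, abs_mul]
      _ ≤ K * M := mul_le_mul h1 h2 (abs_nonneg _) hK0
  exact hnA ((intervalIntegrable_iff_integrableOn_Icc_of_le hA).2 hhi)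

/-- Uniqueness/explicit solution of the linear integral equation
`D t = D 0 + ∫₀ᵗ f s · D s ds` with right-continuous, locally integrable,
bounded coefficient `f`. -/
private lemma uniq_ode {f D : ℝ → ℝ} {K : ℝ}
    (hK : ∀ t, 0 ≤ t → |f t| ≤ K)
    (hfi : ∀ A, 0 ≤ A → IntegrableOn f (Icc 0 A) volume)
    (hfr : ∀ t, 0 ≤ t → ContinuousWithinAt f (Ici t) t)
    (hD : ∀ t, 0 ≤ t → D t = D 0 + ∫ s in (0:ℝ)..t, f s * D s) :
    ∀ t, 0 ≤ t → D t = D 0 * Real.exp (∫ s in (0:ℝ)..t, f s) := by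
  intro A hA
  have hint := uniq_integrable hK hfi hfr hD A hA
  obtain ⟨hDc, hDd⟩ := uniq_aux hA hfr hD hint
  set F : ℝ → ℝ := fun u => ∫ s in (0:ℝ)..u, f s with hF
  have hfiI : IntervalIntegrable f volume 0 A :=
    (intervalIntegrable_iff_integrableOn_Icc_of_le hA).2 (hfi A hA)
  have hFc : ContinuousOn F (Icc 0 A) := by
    have := intervalIntegral.continuousOn_primitive_interval (μ := volume) (f := f)
      (a := (0:ℝ)) (b := A) (by rw [uIcc_of_le hA]; exact hfi A hA)
    rwa [uIcc_of_le hA] at this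
  have hFd : ∀ x ∈ Ico 0 A, HasDerivWithinAt F (f x) (Ici x) x := by
    intro x hx
    have hintx : IntervalIntegrable f volume 0 x :=
      hfiI.mono_set (by rw [uIcc_of_le hx.1, uIcc_of_le hA]
                        exact Icc_subset_Icc le_rfl hx.2.le)
    have hmem : Ioc x A ∈ nhdsWithin x (Ioi x) := Ioc_mem_nhdsGT_of_mem ⟨le_rfl, hx.2⟩
    have hsm : StronglyMeasurableAtFilter f (nhdsWithin x (Ioi x)) volume :=
      ⟨Ioc x A, hmem, ((hfi A hA).mono_set
        (Ioc_subset_Icc_self.trans (Icc_subset_Icc hx.1 le_rfl))).aestronglyMeasurable⟩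
    exact intervalIntegral.integral_hasDerivWithinAt_right hintx hsm
      ((hfr x hx.1).mono Ioi_subset_Ici_self)
  set φ : ℝ → ℝ := fun u => D 0 * Real.exp (F u) with hφ
  have hφc : ContinuousOn φ (Icc 0 A) :=
    continuousOn_const.mul (Real.continuous_exp.comp_continuousOn hFc)
  have hφd : ∀ x ∈ Ico 0 A, HasDerivWithinAt φ (f x * φ x) (Ici x) x := by
    intro x hx
    have h1 := ((hFd x hx).exp).const_mul (D 0)
    refine h1.congr_deriv ?_
    show D 0 * (Real.exp (F x) * f x) = f x * (D 0 * Real.exp (F x))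
    ring
  set ψ : ℝ → ℝ := fun u => D u - φ u with hψ
  have hψ0 : ψ 0 = 0 := by
    simp [hψ, hφ, hF, intervalIntegral.integral_same]
  have hψc : ContinuousOn ψ (Icc 0 A) := hDc.sub hφc
  have hψd : ∀ x ∈ Ico 0 A, HasDerivWithinAt ψ (f x * ψ x) (Ici x) x := by
    intro x hx
    have h1 := (hDd x hx).sub (hφd x hx)
    refine h1.congr_deriv ?_
    show f x * D x - f x * φ x = f x * (D x - φ x)
    ring
  have hg := norm_le_gronwallBound_of_norm_deriv_right_le (δ := 0) (K := K) (ε := 0)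
    hψc hψd (by simp [hψ0]) (fun y hy => by
      have h1 : |f y| ≤ K := hK y hy.1
      have : ‖f y * ψ y‖ = |f y| * ‖ψ y‖ := by simp [Real.norm_eq_abs, abs_mul]
      rw [this]
      have h2 : |f y| * ‖ψ y‖ ≤ K * ‖ψ y‖ :=
        mul_le_mul_of_nonneg_right h1 (norm_nonneg _)
      linarith) A ⟨hA, le_rfl⟩
  rw [gronwallBound_ε0] at hg
  simp only [zero_mul] at hg
  have hz : ψ A = 0 := by
    have := norm_nonneg (ψ A)
    have h0 : ‖ψ A‖ = 0 := le_antisymm hg this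
    simpa using h0
  have : D A = φ A := sub_eq_zero.1 hz
  simpa [hφ] using this

/-- The integral of one exponential pulse. -/
private lemma pulse_integral (μ₀ τ T c : ℝ) (hτ : τ ≠ 0) :
    ∫ x in c..(c+T), μ₀ * Real.exp (-(x - c)/τ) = μ₀ * τ * (1 - Real.exp (-T/τ)) := by
  have hd : ∀ x ∈ uIcc c (c+T), HasDerivAt (fun x => -(τ*μ₀) * Real.exp (-(x - c)/τ))
      (μ₀ * Real.exp (-(x - c)/τ)) x := by
    intro x _
    have h1 : HasDerivAt (fun x => -(x - c)/τ) (-1/τ) x := by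
      have := ((hasDerivAt_id x).sub_const c).div_const τ
      convert this.neg using 1
      · rfl
      · rfl
      · funext y; simp only [id, Pi.neg_apply]; ring
      · ring
    have h2 := (h1.exp).const_mul (-(τ*μ₀))
    convert h2 using 1
    · rfl
    · rfl
    field_simp [hτ]
  have hint : IntervalIntegrable (fun x => μ₀ * Real.exp (-(x - c)/τ)) volume c (c+T) :=
    (Continuous.intervalIntegrable (by continuity) c (c+T))
  rw [intervalIntegral.integral_eq_sub_of_hasDerivAt hd hint]
  simp only [add_sub_cancel_left]
  rw [show -(c-c)/τ = (0:ℝ) by ring, Real.exp_zero]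
  ring

theorem pulse_train_residual_difference
    (ε μ₀ τ T : ℝ) (n : ℕ) (hε : ε ∈ Set.Ioo (0 : ℝ) 1)
    (hμ₀ : 0 < μ₀) (hτ : 0 < τ) (hT : 0 < T)
    (μ CE CRE : ℝ → ℝ)
    (hμ_pulse : ∀ k : ℕ, k < n → ∀ t : ℝ,
      (k : ℝ) * T ≤ t → t < ((k : ℝ) + 1) * T →
        μ t = μ₀ * Real.exp (-(t - (k : ℝ) * T) / τ))
    (hμ_off : ∀ t : ℝ, (n : ℝ) * T ≤ t → μ t = 0)
    -- the difference C_E − C_RE is absolutely continuous with derivative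
    -- −(1/ε)·μ(t)·(C_E − C_RE) almost everywhere, expressed in the
    -- equivalent integral-equation form:
    (hdiff : ∀ t ∈ Set.Ici (0 : ℝ),
      CE t - CRE t =
        (CE 0 - CRE 0) +
          ∫ s in (0 : ℝ)..t, -(1 / ε) * μ s * (CE s - CRE s)) :
    (∀ t : ℝ, (n : ℝ) * T ≤ t →
      CE t - CRE t =
        (CE 0 - CRE 0) *
          Real.exp (-((n : ℝ) * μ₀ * τ / ε) * (1 - Real.exp (-T / τ)))) ∧
    Filter.Tendsto
      (fun m : ℕ =>
        (CE 0 - CRE 0) *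
          Real.exp (-((m : ℝ) * μ₀ * τ / ε) * (1 - Real.exp (-T / τ))))
      Filter.atTop (nhds 0) := by
  obtain ⟨hε0, hε1⟩ := hε
  set D : ℝ → ℝ := fun t => CE t - CRE t with hDdef
  set f : ℝ → ℝ := fun s => -(1/ε) * μ s with hfdef
  -- floor decomposition of points in [0, nT)
  have hfloor : ∀ t : ℝ, 0 ≤ t → t < (n:ℝ)*T →
      ∃ k : ℕ, k < n ∧ (k:ℝ)*T ≤ t ∧ t < ((k:ℝ)+1)*T ∧ ((⌊t/T⌋ : ℤ) : ℝ) = (k:ℝ) := by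
    intro t ht htn
    have h0 : (0:ℤ) ≤ ⌊t/T⌋ := Int.floor_nonneg.2 (div_nonneg ht hT.le)
    refine ⟨⌊t/T⌋.toNat, ?_, ?_, ?_, ?_⟩
    · have h1 : ((⌊t/T⌋ : ℤ) : ℝ) ≤ t/T := Int.floor_le _
      have h2 : t/T < (n:ℝ) := (div_lt_iff₀ hT).2 htn
      have h4 : ⌊t/T⌋ < (n:ℤ) := by exact_mod_cast lt_of_le_of_lt h1 h2
      omega
    · have h1 : ((⌊t/T⌋ : ℤ) : ℝ) ≤ t/T := Int.floor_le _
      have hc : ((⌊t/T⌋.toNat : ℕ) : ℝ) = ((⌊t/T⌋ : ℤ) : ℝ) := by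
        exact_mod_cast Int.toNat_of_nonneg h0
      rw [hc]
      calc ((⌊t/T⌋ : ℤ) : ℝ) * T ≤ (t/T) * T := mul_le_mul_of_nonneg_right h1 hT.le
        _ = t := div_mul_cancel₀ t hT.ne'
    · have h1 : t/T < ((⌊t/T⌋ : ℤ) : ℝ) + 1 := Int.lt_floor_add_one _
      have hc : ((⌊t/T⌋.toNat : ℕ) : ℝ) = ((⌊t/T⌋ : ℤ) : ℝ) := by
        exact_mod_cast Int.toNat_of_nonneg h0
      rw [hc]
      calc t = (t/T) * T := (div_mul_cancel₀ t hT.ne').symm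
        _ < (((⌊t/T⌋ : ℤ) : ℝ) + 1) * T := mul_lt_mul_of_pos_right h1 hT
    · exact_mod_cast (Int.toNat_of_nonneg h0).symm
  -- pointwise bounds on μ
  have hμbound : ∀ t, 0 ≤ t → 0 ≤ μ t ∧ μ t ≤ μ₀ := by
    intro t ht
    by_cases htn : t < (n:ℝ)*T
    · obtain ⟨k, hkn, hk1, hk2, _⟩ := hfloor t ht htn
      rw [hμ_pulse k hkn t hk1 hk2]
      constructor
      · positivity
      · have hle : Real.exp (-(t - (k:ℝ)*T)/τ) ≤ 1 := by
          rw [Real.exp_le_one_iff]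
          apply div_nonpos_of_nonpos_of_nonneg _ hτ.le
          linarith
        calc μ₀ * Real.exp (-(t - (k:ℝ)*T)/τ) ≤ μ₀ * 1 :=
              mul_le_mul_of_nonneg_left hle hμ₀.le
          _ = μ₀ := mul_one μ₀
    · push_neg at htn
      rw [hμ_off t htn]
      exact ⟨le_rfl, hμ₀.le⟩
  -- bound on the coefficient f
  have hK : ∀ t, 0 ≤ t → |f t| ≤ μ₀/ε := by
    intro t ht
    obtain ⟨h1, h2⟩ := hμbound t ht
    have : |f t| = (1/ε) * μ t := by
      rw [hfdef]
      show |-(1/ε) * μ t| = (1/ε) * μ t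
      rw [abs_mul, abs_neg, abs_of_pos (by positivity : (0:ℝ) < 1/ε), abs_of_nonneg h1]
    rw [this]
    calc (1/ε) * μ t ≤ (1/ε) * μ₀ :=
          mul_le_mul_of_nonneg_left h2 (by positivity)
      _ = μ₀/ε := by ring
  -- right continuity of μ (and f) on [0, ∞)
  have hμr : ∀ t, 0 ≤ t → ContinuousWithinAt μ (Ici t) t := by
    intro t ht
    by_cases htn : t < (n:ℝ)*T
    · obtain ⟨k, hkn, hk1, hk2, _⟩ := hfloor t ht htn
      have hg : ContinuousWithinAt (fun y => μ₀ * Real.exp (-(y - (k:ℝ)*T)/τ)) (Ici t) t :=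
        (Continuous.continuousWithinAt (by continuity))
      apply hg.congr_of_eventuallyEq ?_ (hμ_pulse k hkn t hk1 hk2)
      have hio : Iio (((k:ℝ)+1)*T) ∈ nhdsWithin t (Ici t) :=
        mem_nhdsWithin_of_mem_nhds (Iio_mem_nhds hk2)
      filter_upwards [hio, self_mem_nhdsWithin] with y hy1 hy2
      exact hμ_pulse k hkn y (hk1.trans hy2) hy1
    · push_neg at htn
      apply continuousWithinAt_const.congr
      · intro y hy; exact hμ_off y (htn.trans hy)
      · exact hμ_off t htn
  have hfr : ∀ t, 0 ≤ t → ContinuousWithinAt f (Ici t) t := by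
    intro t ht
    exact continuousWithinAt_const.mul (hμr t ht)
  -- integrability of μ (and f) on [0, A]
  have hμint : ∀ A : ℝ, 0 ≤ A → IntegrableOn μ (Icc 0 A) volume := by
    intro A hA
    set g : ℝ → ℝ := fun t =>
      if t < (n:ℝ)*T then μ₀ * Real.exp (-(t - ((⌊t/T⌋ : ℤ) : ℝ)*T)/τ) else 0 with hgdef
    have hgm : Measurable g := by
      apply Measurable.ite (measurableSet_lt measurable_id measurable_const)
      · apply Measurable.const_mul
        apply Real.measurable_exp.comp
        apply Measurable.div_const
        apply Measurable.neg
        apply Measurable.sub measurable_id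
        apply Measurable.mul_const
        exact (measurable_from_top (f := fun z : ℤ => (z:ℝ))).comp
          (Int.measurable_floor.comp (measurable_id.div_const T))
      · exact measurable_const
    have hgb : ∀ t : ℝ, ‖g t‖ ≤ μ₀ := by
      intro t
      rw [Real.norm_eq_abs, hgdef]
      by_cases htn : t < (n:ℝ)*T
      · simp only [if_pos htn]
        have hfl : ((⌊t/T⌋ : ℤ) : ℝ) * T ≤ t := by
          calc ((⌊t/T⌋ : ℤ) : ℝ) * T ≤ (t/T) * T :=
                mul_le_mul_of_nonneg_right (Int.floor_le _) hT.le
            _ = t := div_mul_cancel₀ t hT.ne'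
        have hle : Real.exp (-(t - ((⌊t/T⌋ : ℤ) : ℝ)*T)/τ) ≤ 1 := by
          rw [Real.exp_le_one_iff]
          apply div_nonpos_of_nonpos_of_nonneg _ hτ.le
          linarith
        have hpos : (0:ℝ) ≤ μ₀ * Real.exp (-(t - ((⌊t/T⌋ : ℤ) : ℝ)*T)/τ) := by positivity
        rw [abs_of_nonneg hpos]
        calc μ₀ * Real.exp (-(t - ((⌊t/T⌋ : ℤ) : ℝ)*T)/τ) ≤ μ₀ * 1 :=
              mul_le_mul_of_nonneg_left hle hμ₀.le
          _ = μ₀ := mul_one μ₀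
      · simp only [if_neg htn, abs_zero]
        exact hμ₀.le
    have hgint : IntegrableOn g (Icc 0 A) volume := by
      refine Integrable.mono' (g := fun _ => μ₀)
        (integrableOn_const (measure_Icc_lt_top.ne))
        (hgm.aestronglyMeasurable.restrict) (ae_of_all _ fun t => hgb t)
    refine hgint.congr_fun ?_ measurableSet_Icc
    intro t htI
    rw [hgdef]
    by_cases htn : t < (n:ℝ)*T
    · obtain ⟨k, hkn, hk1, hk2, hcast⟩ := hfloor t htI.1 htn
      simp only [if_pos htn]
      rw [hcast]
      exact (hμ_pulse k hkn t hk1 hk2).symm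
    · push_neg at htn
      simp only [if_neg (not_lt.2 htn)]
      exact (hμ_off t htn).symm
  have hfi : ∀ A : ℝ, 0 ≤ A → IntegrableOn f (Icc 0 A) volume := by
    intro A hA
    exact (hμint A hA).const_mul _
  -- the integral equation for D
  have hD : ∀ t, 0 ≤ t → D t = D 0 + ∫ s in (0:ℝ)..t, f s * D s := by
    intro t ht
    exact hdiff t ht
  -- explicit solution
  have hsol := uniq_ode hK hfi hfr hD
  have hnT0 : (0:ℝ) ≤ (n:ℝ)*T := by positivity
  -- value of the total integral of μ over [0, nT]
  have hadj : ∀ k : ℕ, k < n →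
      IntervalIntegrable μ volume ((k:ℝ)*T) ((((k:ℕ)+1 : ℕ):ℝ)*T) := by
    intro k hkn
    have h1 : IntervalIntegrable μ volume 0 ((n:ℝ)*T) :=
      (intervalIntegrable_iff_integrableOn_Icc_of_le hnT0).2 (hμint _ hnT0)
    apply h1.mono_set
    have hk0 : (0:ℝ) ≤ (k:ℝ)*T := by positivity
    have hk1 : (((k:ℕ)+1 : ℕ):ℝ)*T ≤ (n:ℝ)*T := by
      apply mul_le_mul_of_nonneg_right _ hT.le
      exact_mod_cast Nat.succ_le_of_lt hkn
    have hkk : (k:ℝ)*T ≤ (((k:ℕ)+1 : ℕ):ℝ)*T := by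
      apply mul_le_mul_of_nonneg_right _ hT.le
      exact_mod_cast Nat.le_succ k
    rw [uIcc_of_le hkk, uIcc_of_le hnT0]
    exact Icc_subset_Icc hk0 hk1
  have hterm : ∀ k : ℕ, k < n →
      ∫ x in ((k:ℝ)*T)..((((k:ℕ)+1 : ℕ):ℝ)*T), μ x = μ₀ * τ * (1 - Real.exp (-T/τ)) := by
    intro k hkn
    have hend : (((k:ℕ)+1 : ℕ):ℝ)*T = (k:ℝ)*T + T := by push_cast; ring
    have hlt : (k:ℝ)*T < (k:ℝ)*T + T := by linarith
    have hae : ∀ᵐ x ∂(volume : Measure ℝ),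
        x ∈ Ι ((k:ℝ)*T) ((k:ℝ)*T + T) → μ x = μ₀ * Real.exp (-(x - (k:ℝ)*T)/τ) := by
      have hsing : ∀ᵐ x : ℝ ∂(volume : Measure ℝ), x ≠ (k:ℝ)*T + T := by
        refine ae_iff.2 ?_
        simp only [not_not]
        have : {x : ℝ | x = (k:ℝ)*T + T} = {(k:ℝ)*T + T} := by ext y; simp
        rw [this]
        exact measure_singleton _
      filter_upwards [hsing] with x hx hxI
      rw [Set.uIoc_of_le hlt.le] at hxI
      have hx2 : x < ((k:ℝ)+1)*T := by
        have := lt_of_le_of_ne hxI.2 hx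
        linarith
      exact hμ_pulse k hkn x hxI.1.le hx2
    rw [hend, intervalIntegral.integral_congr_ae hae]
    exact pulse_integral μ₀ τ T ((k:ℝ)*T) hτ.ne'
  have hsum := intervalIntegral.sum_integral_adjacent_intervals
    (μ := volume) (f := μ) (a := fun k : ℕ => (k:ℝ)*T) (n := n) hadj
  have htot : ∫ x in (0:ℝ)..((n:ℝ)*T), μ x = (n:ℝ) * (μ₀ * τ * (1 - Real.exp (-T/τ))) := by
    have h0 : ((0:ℕ):ℝ)*T = 0 := by norm_num
    rw [← h0]
    rw [← hsum]
    rw [Finset.sum_congr rfl (fun k hk => hterm k (Finset.mem_range.1 hk))]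
    rw [Finset.sum_const, Finset.card_range, nsmul_eq_mul]
  refine ⟨?_, ?_⟩
  · -- explicit value of D t for t ≥ nT
    intro t htn
    have ht0 : (0:ℝ) ≤ t := hnT0.trans htn
    have h1 := hsol t ht0
    -- split the integral
    have hfint_t : IntervalIntegrable f volume 0 t :=
      (intervalIntegrable_iff_integrableOn_Icc_of_le ht0).2 (hfi t ht0)
    have hf1 : IntervalIntegrable f volume 0 ((n:ℝ)*T) :=
      hfint_t.mono_set (by rw [uIcc_of_le hnT0, uIcc_of_le ht0]
                           exact Icc_subset_Icc le_rfl htn)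
    have hf2 : IntervalIntegrable f volume ((n:ℝ)*T) t :=
      hfint_t.mono_set (by rw [uIcc_of_le htn, uIcc_of_le ht0]
                           exact Icc_subset_Icc hnT0 le_rfl)
    have hsplit : (∫ s in (0:ℝ)..t, f s)
        = (∫ s in (0:ℝ)..((n:ℝ)*T), f s) + ∫ s in ((n:ℝ)*T)..t, f s :=
      (intervalIntegral.integral_add_adjacent_intervals hf1 hf2).symm
    have hzero : (∫ s in ((n:ℝ)*T)..t, f s) = 0 := by
      rw [intervalIntegral.integral_congr (g := fun _ => (0:ℝ)) ?_,
        intervalIntegral.integral_zero]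
      intro y hy
      rw [uIcc_of_le htn] at hy
      show -(1/ε) * μ y = 0
      rw [hμ_off y hy.1, mul_zero]
    have hfirst : (∫ s in (0:ℝ)..((n:ℝ)*T), f s)
        = -(1/ε) * ((n:ℝ) * (μ₀ * τ * (1 - Real.exp (-T/τ)))) := by
      have : (∫ s in (0:ℝ)..((n:ℝ)*T), f s)
          = -(1/ε) * ∫ s in (0:ℝ)..((n:ℝ)*T), μ s := by
        rw [← intervalIntegral.integral_const_mul]
      rw [this, htot]
    have harg : -(1/ε) * ((n:ℝ) * (μ₀ * τ * (1 - Real.exp (-T/τ)))) + 0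
        = -((n:ℝ) * μ₀ * τ / ε) * (1 - Real.exp (-T/τ)) := by
      rw [add_zero]
      ring
    show D t = D 0 * Real.exp (-((n:ℝ) * μ₀ * τ / ε) * (1 - Real.exp (-T/τ)))
    rw [h1, hsplit, hzero, hfirst, harg]
  · -- the limit
    have hE : Real.exp (-T/τ) < 1 := by
      rw [Real.exp_lt_one_iff, neg_div]
      have : (0:ℝ) < T/τ := by positivity
      linarith
    set c : ℝ := -(μ₀*τ/ε*(1 - Real.exp (-T/τ))) with hc
    have hcneg : c < 0 := by
      rw [hc]
      have h1 : (0:ℝ) < μ₀*τ/ε := by positivity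
      have h2 : (0:ℝ) < 1 - Real.exp (-T/τ) := by linarith
      nlinarith
    have htend : Filter.Tendsto (fun m : ℕ => (CE 0 - CRE 0) * Real.exp ((m:ℝ)*c))
        Filter.atTop (nhds ((CE 0 - CRE 0) * 0)) :=
      (Real.tendsto_exp_atBot.comp
        (Filter.Tendsto.atTop_mul_const_of_neg hcneg tendsto_natCast_atTop_atTop)).const_mul _
    rw [mul_zero] at htend
    refine htend.congr fun m => ?_
    congr 1
    rw [hc]
    ring
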